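/- Every nontrivial solution of the horizontal problem has growth rate vanishing with the frequency: if ψ is a nontrivial solution of the horizontal problem at frequency ξ ≠ 0 with growth rate λ > 0, then λ² ≤ g[ρ]|ξ| / ρ₊. -/

import Mathlib

open MeasureTheory Set Filter Topology

noncomputable section

/-- The set of Rayleigh quotients defining the critical magnetic number `|B|_c`. -/
def BcSet (g ρp ρm : ℝ) : Set ℝ :=
  {r | ∃ φ : ℝ → ℝ, (∃ K, LipschitzWith K φ) ∧ φ (-1) = 0 ∧ φ 1 = 0 ∧
    ¬ (∀ᵐ y ∂(volume.restrict (Icc (-1:ℝ) 1)), φ y = 0) ∧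
    r = g * (ρp - ρm) * (φ 0) ^ 2 / ∫ y in (-1:ℝ)..1, (deriv φ y) ^ 2}

/-- The set of quotients defining the vertical critical frequency `|ξ|_{vc}^B`. -/
def XivcSet (g ρp ρm B : ℝ) : Set ℝ :=
  {r | ∃ φ : ℝ → ℝ, ContDiff ℝ 2 φ ∧ φ (-1) = 0 ∧ φ 1 = 0 ∧
    deriv φ (-1) = 0 ∧ deriv φ 1 = 0 ∧
    0 < g * (ρp - ρm) * (φ 0) ^ 2 - B ^ 2 * ∫ y in (-1:ℝ)..1, (deriv φ y) ^ 2 ∧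
    r = (B ^ 2 * ∫ y in (-1:ℝ)..1, (deriv (deriv φ) y) ^ 2) /
        (g * (ρp - ρm) * (φ 0) ^ 2 - B ^ 2 * ∫ y in (-1:ℝ)..1, (deriv φ y) ^ 2)}

/-- The set of quotients defining the horizontal critical frequency `|ξ|_{hc}^B`. -/
def XihcSet (g ρp ρm B : ℝ) : Set ℝ :=
  {r | ∃ φ : ℝ → ℝ, (∃ K, LipschitzWith K φ) ∧ φ (-1) = 0 ∧ φ 1 = 0 ∧
    ¬ (∀ᵐ y ∂(volume.restrict (Icc (-1:ℝ) 1)), φ y = 0) ∧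
    r = (g * (ρp - ρm) * (φ 0) ^ 2 - B ^ 2 * ∫ y in (-1:ℝ)..1, (deriv φ y) ^ 2) /
        (B ^ 2 * ∫ y in (-1:ℝ)..1, (φ y) ^ 2)}

/-- The fourth-order ODE of the vertical problem, with density `ρ` and viscosity `μ`. -/
def VertODE (ρ μ B ξ lam : ℝ) (f : ℝ → ℝ) (y : ℝ) : Prop :=
  -lam ^ 2 * ρ * (ξ ^ 2 * f y - iteratedDeriv 2 f y) =
    μ * lam * (ξ ^ 4 * f y - 2 * ξ ^ 2 * iteratedDeriv 2 f y + iteratedDeriv 4 f y) +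
      B ^ 2 * (-(ξ ^ 2) * iteratedDeriv 2 f y + iteratedDeriv 4 f y)

/-- The fourth-order ODE of the horizontal problem. -/
def HorizODE (ρ μ B ξ lam : ℝ) (f : ℝ → ℝ) (y : ℝ) : Prop :=
  -lam ^ 2 * ρ * (ξ ^ 2 * f y - iteratedDeriv 2 f y) =
    μ * lam * (ξ ^ 4 * f y - 2 * ξ ^ 2 * iteratedDeriv 2 f y + iteratedDeriv 4 f y) +
      B ^ 2 * (ξ ^ 4 * f y - ξ ^ 2 * iteratedDeriv 2 f y)

/-- `ψ : [-1,1] → ℝ` solves the vertical problem at frequency `ξ` with growth rate `lam`: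
its restrictions to `[-1,0]` and `[0,1]` are `C^n` up to the endpoints (i.e. agree there with
globally `C^n` functions `ψm`, `ψp`), `ψ` and `ψ'` are continuous at `0`, the interior ODEs,
the jump conditions at `0` and the boundary conditions at `±1` hold. -/
def IsVertSol (ρp ρm μp μm g B ξ lam : ℝ) (n : ℕ∞) (ψ : ℝ → ℝ) : Prop :=
  ∃ ψm ψp : ℝ → ℝ,
    ContDiff ℝ n ψm ∧ ContDiff ℝ n ψp ∧
    (∀ y ∈ Icc (-1:ℝ) 0, ψ y = ψm y) ∧
    (∀ y ∈ Icc (0:ℝ) 1, ψ y = ψp y) ∧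
    ψp 0 = ψm 0 ∧
    deriv ψp 0 = deriv ψm 0 ∧
    (∀ y ∈ Ioo (-1:ℝ) 0, VertODE ρm μm B ξ lam ψm y) ∧
    (∀ y ∈ Ioo (0:ℝ) 1, VertODE ρp μp B ξ lam ψp y) ∧
    (μp * lam * (ξ ^ 2 * ψp 0 + iteratedDeriv 2 ψp 0) + B ^ 2 * iteratedDeriv 2 ψp 0) -
        (μm * lam * (ξ ^ 2 * ψm 0 + iteratedDeriv 2 ψm 0) + B ^ 2 * iteratedDeriv 2 ψm 0) = 0 ∧
    (μp * lam * (iteratedDeriv 3 ψp 0 - 3 * ξ ^ 2 * deriv ψp 0) + B ^ 2 * iteratedDeriv 3 ψp 0) -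
        (μm * lam * (iteratedDeriv 3 ψm 0 - 3 * ξ ^ 2 * deriv ψm 0) + B ^ 2 * iteratedDeriv 3 ψm 0) =
      lam ^ 2 * (ρp * deriv ψp 0 - ρm * deriv ψm 0) + g * (ρp - ρm) * ξ ^ 2 * ψ 0 ∧
    ψ (-1) = 0 ∧ ψ 1 = 0 ∧ deriv ψm (-1) = 0 ∧ deriv ψp 1 = 0

/-- `ψ : [-1,1] → ℝ` solves the horizontal problem at frequency `ξ` with growth rate `lam`. -/
def IsHorizSol (ρp ρm μp μm g B ξ lam : ℝ) (n : ℕ∞) (ψ : ℝ → ℝ) : Prop :=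
  ∃ ψm ψp : ℝ → ℝ,
    ContDiff ℝ n ψm ∧ ContDiff ℝ n ψp ∧
    (∀ y ∈ Icc (-1:ℝ) 0, ψ y = ψm y) ∧
    (∀ y ∈ Icc (0:ℝ) 1, ψ y = ψp y) ∧
    ψp 0 = ψm 0 ∧
    deriv ψp 0 = deriv ψm 0 ∧
    (∀ y ∈ Ioo (-1:ℝ) 0, HorizODE ρm μm B ξ lam ψm y) ∧
    (∀ y ∈ Ioo (0:ℝ) 1, HorizODE ρp μp B ξ lam ψp y) ∧
    μp * lam * (ξ ^ 2 * ψp 0 + iteratedDeriv 2 ψp 0) -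
        μm * lam * (ξ ^ 2 * ψm 0 + iteratedDeriv 2 ψm 0) = 0 ∧
    μp * lam * (iteratedDeriv 3 ψp 0 - 3 * ξ ^ 2 * deriv ψp 0) -
        μm * lam * (iteratedDeriv 3 ψm 0 - 3 * ξ ^ 2 * deriv ψm 0) =
      lam ^ 2 * (ρp * deriv ψp 0 - ρm * deriv ψm 0) + g * (ρp - ρm) * ξ ^ 2 * ψ 0 ∧
    ψ (-1) = 0 ∧ ψ 1 = 0 ∧ deriv ψm (-1) = 0 ∧ deriv ψp 1 = 0


private lemma hasDerivAt_iter {f : ℝ → ℝ} (hf : ContDiff ℝ 4 f) {n : ℕ} (hn : n < 4) (x : ℝ) :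
    HasDerivAt (iteratedDeriv n f) (iteratedDeriv (n + 1) f x) x := by
  rw [iteratedDeriv_succ]
  exact ((hf.differentiable_iteratedDeriv n (by exact_mod_cast hn)) x).hasDerivAt

private lemma contIter {f : ℝ → ℝ} (hf : ContDiff ℝ 4 f) {n : ℕ} (hn : n ≤ 4) :
    Continuous (iteratedDeriv n f) :=
  hf.continuous_iteratedDeriv n (by exact_mod_cast hn)

private lemma ibp {u v u' v' : ℝ → ℝ} (a b : ℝ)
    (hu : ∀ x, HasDerivAt u (u' x) x) (hv : ∀ x, HasDerivAt v (v' x) x)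
    (hu' : Continuous u') (hv' : Continuous v') :
    ∫ x in a..b, u x * v' x =
      u b * v b - u a * v a - ∫ x in a..b, u' x * v x := by
  have hu0 : Continuous u := continuous_iff_continuousAt.2 fun x => (hu x).continuousAt
  have hv0 : Continuous v := continuous_iff_continuousAt.2 fun x => (hv x).continuousAt
  have h := intervalIntegral.integral_deriv_mul_eq_sub (a := a) (b := b)
    (fun x _ => hu x) (fun x _ => hv x) (hu'.intervalIntegrable a b) (hv'.intervalIntegrable a b)
  rw [intervalIntegral.integral_add ((show Continuous (fun x => u' x * v x) from hu'.mul hv0).intervalIntegrable a b)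
    ((show Continuous (fun x => u x * v' x) from hu0.mul hv').intervalIntegrable a b)] at h
  linarith

private lemma integral_comb3 {f g h : ℝ → ℝ} (hf : Continuous f) (hg : Continuous g)
    (hh : Continuous h) (c1 c2 c3 a b : ℝ) :
    ∫ y in a..b, (c1 * f y + c2 * g y + c3 * h y) =
      c1 * (∫ y in a..b, f y) + c2 * (∫ y in a..b, g y) + c3 * ∫ y in a..b, h y := by
  rw [intervalIntegral.integral_add
      ((show Continuous (fun y => c1 * f y + c2 * g y) from (continuous_const.mul hf).add (continuous_const.mul hg)).intervalIntegrable a b)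
      ((show Continuous (fun y => c3 * h y) from continuous_const.mul hh).intervalIntegrable a b),
    intervalIntegral.integral_add ((show Continuous (fun y => c1 * f y) from continuous_const.mul hf).intervalIntegrable a b)
      ((show Continuous (fun y => c2 * g y) from continuous_const.mul hg).intervalIntegrable a b),
    intervalIntegral.integral_const_mul, intervalIntegral.integral_const_mul,
    intervalIntegral.integral_const_mul]

private lemma hd1 {f : ℝ → ℝ} (hf : ContDiff ℝ 4 f) (x : ℝ) :
    HasDerivAt (deriv f) (iteratedDeriv 2 f x) x := by
  have := hasDerivAt_iter hf (n := 1) (by norm_num) x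
  simpa [iteratedDeriv_one] using this

private lemma hd0 {f : ℝ → ℝ} (hf : ContDiff ℝ 4 f) (x : ℝ) :
    HasDerivAt f (deriv f x) x :=
  ((hf.differentiable (by norm_num)) x).hasDerivAt

private lemma intC {f : ℝ → ℝ} (hf : ContDiff ℝ 4 f) (a b : ℝ) :
    ∫ y in a..b, f y * iteratedDeriv 2 f y =
      f b * deriv f b - f a * deriv f a - ∫ y in a..b, (deriv f y) ^ 2 := by
  have h := ibp a b (hd0 hf) (hd1 hf) ((hf.continuous_deriv (by norm_num)))
    (contIter hf (by norm_num))
  rw [h]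
  have : (fun y => deriv f y * deriv f y) = fun y => (deriv f y) ^ 2 := by
    funext y; ring
  rw [this]

private lemma intE {f : ℝ → ℝ} (hf : ContDiff ℝ 4 f) (a b : ℝ) :
    ∫ y in a..b, f y * iteratedDeriv 4 f y =
      f b * iteratedDeriv 3 f b - f a * iteratedDeriv 3 f a
        - (deriv f b * iteratedDeriv 2 f b - deriv f a * iteratedDeriv 2 f a)
        + ∫ y in a..b, (iteratedDeriv 2 f y) ^ 2 := by
  have h1 := ibp a b (hd0 hf) (hasDerivAt_iter hf (n := 3) (by norm_num))
    (hf.continuous_deriv (by norm_num)) (contIter hf (by norm_num))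
  have h2 := ibp a b (hd1 hf) (hasDerivAt_iter hf (n := 2) (by norm_num))
    (contIter hf (n := 2) (by norm_num)) (contIter hf (n := 3) (by norm_num))
  rw [h1, h2]
  have : (fun y => iteratedDeriv 2 f y * iteratedDeriv 2 f y)
      = fun y => (iteratedDeriv 2 f y) ^ 2 := by funext y; ring
  rw [this]
  ring

private lemma intD {f : ℝ → ℝ} (hf : ContDiff ℝ 4 f) (a b : ℝ) :
    ∫ y in a..b, f y * deriv f y = ((f b) ^ 2 - (f a) ^ 2) / 2 := by
  have h := ibp a b (hd0 hf) (hd0 hf) (hf.continuous_deriv (by norm_num))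
    (hf.continuous_deriv (by norm_num))
  have hc : (fun y => deriv f y * f y) = fun y => f y * deriv f y := by funext y; ring
  rw [hc] at h
  linarith

private lemma piece (ρ μ Bf ξ lam a b : ℝ) (hab : a ≤ b) (f : ℝ → ℝ) (hf : ContDiff ℝ 4 f)
    (hODE : ∀ y ∈ Ioo a b, HorizODE ρ μ Bf ξ lam f y) :
    (-lam ^ 2 * ρ * ξ ^ 2 - μ * lam * ξ ^ 4 - Bf ^ 2 * ξ ^ 4) * (∫ y in a..b, (f y) ^ 2)
      + (lam ^ 2 * ρ + 2 * μ * lam * ξ ^ 2 + Bf ^ 2 * ξ ^ 2) *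
          (∫ y in a..b, f y * iteratedDeriv 2 f y)
      + (-(μ * lam)) * (∫ y in a..b, f y * iteratedDeriv 4 f y) = 0 := by
  have h0 : Continuous f := hf.continuous
  have h2 : Continuous (iteratedDeriv 2 f) := contIter hf (by norm_num)
  have h4 : Continuous (iteratedDeriv 4 f) := contIter hf (by norm_num)
  rw [← integral_comb3 (show Continuous (fun y => f y ^ 2) from h0.pow 2)
      (show Continuous (fun y => f y * iteratedDeriv 2 f y) from h0.mul h2)
      (show Continuous (fun y => f y * iteratedDeriv 4 f y) from h0.mul h4)
      (-lam ^ 2 * ρ * ξ ^ 2 - μ * lam * ξ ^ 4 - Bf ^ 2 * ξ ^ 4)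
      (lam ^ 2 * ρ + 2 * μ * lam * ξ ^ 2 + Bf ^ 2 * ξ ^ 2) (-(μ * lam)) a b]
  have hbne : ∀ᵐ (y : ℝ), y ≠ b := by
    rw [ae_iff]
    simpa only [ne_eq, not_not, setOf_eq_eq_singleton] using measure_singleton b
  have hcongr : ∀ᵐ (y : ℝ), y ∈ uIoc a b →
      ((-lam ^ 2 * ρ * ξ ^ 2 - μ * lam * ξ ^ 4 - Bf ^ 2 * ξ ^ 4) * (f y) ^ 2
        + (lam ^ 2 * ρ + 2 * μ * lam * ξ ^ 2 + Bf ^ 2 * ξ ^ 2) * (f y * iteratedDeriv 2 f y)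
        + (-(μ * lam)) * (f y * iteratedDeriv 4 f y)) = (0 : ℝ) := by
    filter_upwards [hbne] with y hy hmem
    rw [uIoc_of_le hab] at hmem
    have hyIoo : y ∈ Ioo a b := ⟨hmem.1, lt_of_le_of_ne hmem.2 hy⟩
    have hE := hODE y hyIoo
    unfold HorizODE at hE
    linear_combination (f y) * hE
  calc (∫ y in a..b, ((-lam ^ 2 * ρ * ξ ^ 2 - μ * lam * ξ ^ 4 - Bf ^ 2 * ξ ^ 4) * (f y) ^ 2
        + (lam ^ 2 * ρ + 2 * μ * lam * ξ ^ 2 + Bf ^ 2 * ξ ^ 2) * (f y * iteratedDeriv 2 f y)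
        + (-(μ * lam)) * (f y * iteratedDeriv 4 f y)))
      = ∫ y in a..b, (0 : ℝ) := intervalIntegral.integral_congr_ae hcongr
    _ = 0 := by simp

private lemma intSq2 {f : ℝ → ℝ} (hf : ContDiff ℝ 4 f) (ξ a b : ℝ) :
    ∫ y in a..b, (iteratedDeriv 2 f y + ξ ^ 2 * f y) ^ 2 =
      (∫ y in a..b, (iteratedDeriv 2 f y) ^ 2)
        + 2 * ξ ^ 2 * (∫ y in a..b, f y * iteratedDeriv 2 f y)
        + ξ ^ 4 * ∫ y in a..b, (f y) ^ 2 := by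
  have h0 : Continuous f := hf.continuous
  have h2 : Continuous (iteratedDeriv 2 f) := contIter hf (by norm_num)
  have := integral_comb3 (show Continuous (fun y => iteratedDeriv 2 f y ^ 2) from h2.pow 2)
    (show Continuous (fun y => f y * iteratedDeriv 2 f y) from h0.mul h2)
    (show Continuous (fun y => f y ^ 2) from h0.pow 2) 1 (2 * ξ ^ 2) (ξ ^ 4) a b
  rw [show (fun y => (iteratedDeriv 2 f y + ξ ^ 2 * f y) ^ 2)
      = fun y => 1 * (iteratedDeriv 2 f y) ^ 2 + 2 * ξ ^ 2 * (f y * iteratedDeriv 2 f y)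
          + ξ ^ 4 * (f y) ^ 2 from funext fun y => by ring]
  rw [this]; ring

private lemma intSq1 {f : ℝ → ℝ} (hf : ContDiff ℝ 4 f) (c a b : ℝ) :
    ∫ y in a..b, (c * f y + deriv f y) ^ 2 =
      c ^ 2 * (∫ y in a..b, (f y) ^ 2)
        + 2 * c * (∫ y in a..b, f y * deriv f y)
        + ∫ y in a..b, (deriv f y) ^ 2 := by
  have h0 : Continuous f := hf.continuous
  have h1 : Continuous (deriv f) := hf.continuous_deriv (by norm_num)
  have := integral_comb3 (show Continuous (fun y => f y ^ 2) from h0.pow 2)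
    (show Continuous (fun y => f y * deriv f y) from h0.mul h1)
    (show Continuous (fun y => deriv f y ^ 2) from h1.pow 2) (c ^ 2) (2 * c) 1 a b
  rw [show (fun y => (c * f y + deriv f y) ^ 2)
      = fun y => c ^ 2 * (f y) ^ 2 + 2 * c * (f y * deriv f y) + 1 * (deriv f y) ^ 2
      from funext fun y => by ring]
  rw [this]; ring

private lemma zero_of_integral_sq {f : ℝ → ℝ} (hf : Continuous f) {a b : ℝ} (hab : a < b)
    (h : ∫ y in a..b, (f y) ^ 2 = 0) : ∀ y ∈ Icc a b, f y = 0 := by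
  by_contra hcon
  push_neg at hcon
  obtain ⟨y0, hy0, hne⟩ := hcon
  have hpos : 0 < ∫ y in a..b, (f y) ^ 2 := by
    rw [intervalIntegral.integral_pos_iff_support_of_nonneg_ae'
      (by filter_upwards with y using sq_nonneg _) ((show Continuous (fun y => f y ^ 2) from hf.pow 2).intervalIntegrable a b)]
    refine ⟨hab, ?_⟩
    have hUopen : IsOpen {y : ℝ | f y ≠ 0} := isOpen_ne.preimage hf
    obtain ⟨ε, hε, hball⟩ := Metric.isOpen_iff.1 hUopen y0 hne
    set c := max a (y0 - ε) with hc
    set d := min b (y0 + ε) with hd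
    have hcd : c < d := by
      rw [hc, hd]
      rcases hy0 with ⟨h1, h2⟩
      refine max_lt (lt_min hab (by linarith)) (lt_min (by linarith) (by linarith))
    have hsub : Ioo c d ⊆ (Function.support fun y => (f y) ^ 2) ∩ Ioc a b := by
      intro x hx
      constructor
      · have hxball : x ∈ Metric.ball y0 ε := by
          rw [Real.ball_eq_Ioo]
          exact ⟨lt_of_le_of_lt (le_max_right _ _) hx.1, lt_of_lt_of_le hx.2 (min_le_right _ _)⟩
        have := hball hxball
        simp only [Function.mem_support]
        exact pow_ne_zero 2 this
      · exact ⟨lt_of_le_of_lt (le_max_left _ _) hx.1,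
          le_of_lt (lt_of_lt_of_le hx.2 (min_le_left _ _))⟩
    calc (0 : ENNReal) < volume (Ioo c d) := by
          rw [Real.volume_Ioo]; simp [hcd, sub_pos.2 hcd]
      _ ≤ _ := measure_mono hsub
  linarith

set_option maxHeartbeats 2000000 in
/-- any growth rate of a nontrivial solution of the horizontal problem satisfies
`λ² ≤ g[ρ]|ξ|/ρ₊`. -/
theorem horizontal_growth_rate_vanishes_with_frequency
    (ρp ρm μp μm g B : ℝ)
    (hρm : 0 < ρm) (hρ : ρm < ρp) (hμp : 0 < μp) (hμm : 0 < μm) (hg : 0 < g)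
    (hB : B ≠ 0)
    (ξ : ℝ) (hξ : ξ ≠ 0) (lam : ℝ) (hlam : 0 < lam) (ψ : ℝ → ℝ)
    (hsol : IsHorizSol ρp ρm μp μm g B ξ lam 4 ψ)
    (hnontriv : ¬ (∀ y ∈ Icc (-1:ℝ) 1, ψ y = 0)) :
    lam ^ 2 ≤ g * (ρp - ρm) * |ξ| / ρp := by
  obtain ⟨ψm, ψp, hcm, hcp, hm, hp, h00, h01, hODEm, hODEp, hJ1, hJ2, hψa, hψb, hdm, hdp⟩ := hsol
  have hρp : (0:ℝ) < ρp := lt_trans hρm hρ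
  have hξ2 : (0:ℝ) < ξ ^ 2 := lt_of_le_of_ne (sq_nonneg ξ) (Ne.symm (pow_ne_zero 2 hξ))
  have habs : (0:ℝ) < |ξ| := abs_pos.2 hξ
  -- boundary values
  have hψp1 : ψp 1 = 0 := by
    rw [← hp 1 (by norm_num : (1:ℝ) ∈ Icc (0:ℝ) 1)]; exact hψb
  have hψm1 : ψm (-1) = 0 := by
    rw [← hm (-1) (by norm_num : (-1:ℝ) ∈ Icc (-1:ℝ) 0)]; exact hψa
  have hψ0 : ψ 0 = ψp 0 := hp 0 (by norm_num)
  rw [hψ0, h01] at hJ2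
  rw [← h00] at hJ1
  -- piece identities
  have Pp := piece ρp μp B ξ lam 0 1 (by norm_num) ψp hcp hODEp
  have Pm := piece ρm μm B ξ lam (-1) 0 (by norm_num) ψm hcm hODEm
  have Cp := intC hcp 0 1
  have Cm := intC hcm (-1) 0
  have Ep := intE hcp 0 1
  have Em := intE hcm (-1) 0
  have Dp := intD hcp 0 1
  have Sp2 := intSq2 hcp ξ 0 1
  have Sm2 := intSq2 hcm ξ (-1) 0
  have Tp1 := intSq1 hcp |ξ| 0 1
  rw [hψp1, hdp, h01] at Cp Ep
  rw [hψm1, hdm, ← h00] at Cm Em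
  rw [hψp1] at Dp
  -- names for integrals
  set Ip0 := ∫ y in (0:ℝ)..1, (ψp y) ^ 2 with hIp0def
  set Ip1 := ∫ y in (0:ℝ)..1, (deriv ψp y) ^ 2 with hIp1def
  set Im0 := ∫ y in (-1:ℝ)..0, (ψm y) ^ 2 with hIm0def
  set Im1 := ∫ y in (-1:ℝ)..0, (deriv ψm y) ^ 2 with hIm1def
  set SpI := ∫ y in (0:ℝ)..1, (iteratedDeriv 2 ψp y + ξ ^ 2 * ψp y) ^ 2 with hSpdef
  set SmI := ∫ y in (-1:ℝ)..0, (iteratedDeriv 2 ψm y + ξ ^ 2 * ψm y) ^ 2 with hSmdef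
  set TpI := ∫ y in (0:ℝ)..1, (|ξ| * ψp y + deriv ψp y) ^ 2 with hTpdef
  clear_value Ip0 Ip1 Im0 Im1 SpI SmI TpI
  -- nonnegativity
  have hIp0nn : 0 ≤ Ip0 := by
    rw [hIp0def]
    exact intervalIntegral.integral_nonneg (by norm_num) (fun u _ => sq_nonneg _)
  have hIp1nn : 0 ≤ Ip1 := by
    rw [hIp1def]
    exact intervalIntegral.integral_nonneg (by norm_num) (fun u _ => sq_nonneg _)
  have hIm0nn : 0 ≤ Im0 := by
    rw [hIm0def]
    exact intervalIntegral.integral_nonneg (by norm_num) (fun u _ => sq_nonneg _)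
  have hIm1nn : 0 ≤ Im1 := by
    rw [hIm1def]
    exact intervalIntegral.integral_nonneg (by norm_num) (fun u _ => sq_nonneg _)
  have hSpnn : 0 ≤ SpI := by
    rw [hSpdef]
    exact intervalIntegral.integral_nonneg (by norm_num) (fun u _ => sq_nonneg _)
  have hSmnn : 0 ≤ SmI := by
    rw [hSmdef]
    exact intervalIntegral.integral_nonneg (by norm_num) (fun u _ => sq_nonneg _)
  have hTpnn : 0 ≤ TpI := by
    rw [hTpdef]
    exact intervalIntegral.integral_nonneg (by norm_num) (fun u _ => sq_nonneg _)
  -- energy identity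
  have energy : lam ^ 2 * (ρp * (ξ ^ 2 * Ip0 + Ip1) + ρm * (ξ ^ 2 * Im0 + Im1))
      + lam * μp * (SpI + 4 * ξ ^ 2 * Ip1) + lam * μm * (SmI + 4 * ξ ^ 2 * Im1)
      + B ^ 2 * ξ ^ 2 * (ξ ^ 2 * (Ip0 + Im0) + Ip1 + Im1)
      = g * (ρp - ρm) * ξ ^ 2 * (ψp 0) ^ 2 := by
    linear_combination (-1) * Pp + (-1) * Pm
      + (lam ^ 2 * ρp + 4 * μp * lam * ξ ^ 2 + B ^ 2 * ξ ^ 2) * Cp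
      + (lam ^ 2 * ρm + 4 * μm * lam * ξ ^ 2 + B ^ 2 * ξ ^ 2) * Cm
      + (-(μp * lam)) * Ep + (-(μm * lam)) * Em
      + (ψp 0) * hJ2 + (-(deriv ψm 0)) * hJ1
      + (lam * μp) * Sp2 + (lam * μm) * Sm2
  -- Poincaré-type bound: |ξ| (ψp 0)² ≤ ξ² Ip0 + Ip1
  have hT : TpI = ξ ^ 2 * Ip0 + Ip1 - |ξ| * (ψp 0) ^ 2 := by
    have hs : |ξ| ^ 2 = ξ ^ 2 := sq_abs ξ
    linear_combination Tp1 + 2 * |ξ| * Dp + Ip0 * hs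
  -- main inequality chain
  have energy' : lam ^ 2 * ρp * (ξ ^ 2 * Ip0 + Ip1)
      = g * (ρp - ρm) * ξ ^ 2 * (ψp 0) ^ 2
        - lam ^ 2 * (ρm * (ξ ^ 2 * Im0 + Im1))
        - lam * μp * (SpI + 4 * ξ ^ 2 * Ip1) - lam * μm * (SmI + 4 * ξ ^ 2 * Im1)
        - B ^ 2 * ξ ^ 2 * (ξ ^ 2 * (Ip0 + Im0) + Ip1 + Im1) := by
    linear_combination energy
  have t1 : 0 ≤ lam ^ 2 * (ρm * (ξ ^ 2 * Im0 + Im1)) :=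
    mul_nonneg (sq_nonneg lam)
      (mul_nonneg hρm.le (add_nonneg (mul_nonneg hξ2.le hIm0nn) hIm1nn))
  have t2 : 0 ≤ lam * μp * (SpI + 4 * ξ ^ 2 * Ip1) :=
    mul_nonneg (mul_nonneg hlam.le hμp.le)
      (add_nonneg hSpnn (mul_nonneg (by positivity) hIp1nn))
  have t3 : 0 ≤ lam * μm * (SmI + 4 * ξ ^ 2 * Im1) :=
    mul_nonneg (mul_nonneg hlam.le hμm.le)
      (add_nonneg hSmnn (mul_nonneg (by positivity) hIm1nn))
  have t4 : 0 ≤ B ^ 2 * ξ ^ 2 * (ξ ^ 2 * (Ip0 + Im0) + Ip1 + Im1) :=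
    mul_nonneg (mul_nonneg (sq_nonneg B) (sq_nonneg ξ))
      (add_nonneg (add_nonneg (mul_nonneg hξ2.le (add_nonneg hIp0nn hIm0nn)) hIp1nn) hIm1nn)
  have t0 : 0 ≤ lam ^ 2 * ρp * (ξ ^ 2 * Ip0 + Ip1) :=
    mul_nonneg (mul_nonneg (sq_nonneg lam) hρp.le)
      (add_nonneg (mul_nonneg hξ2.le hIp0nn) hIp1nn)
  have key : lam ^ 2 * ρp * (ξ ^ 2 * Ip0 + Ip1) ≤ g * (ρp - ρm) * ξ ^ 2 * (ψp 0) ^ 2 := by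
    linarith [energy', t1, t2, t3, t4]
  have h2 : ξ ^ 2 * (ψp 0) ^ 2 ≤ |ξ| * (ξ ^ 2 * Ip0 + Ip1) := by
    have hb : |ξ| * (ψp 0) ^ 2 ≤ ξ ^ 2 * Ip0 + Ip1 := by linarith [hTpnn, hT]
    have hm := mul_le_mul_of_nonneg_left hb (abs_nonneg ξ)
    have hsq : |ξ| * (|ξ| * (ψp 0) ^ 2) = ξ ^ 2 * (ψp 0) ^ 2 := by
      rw [← sq_abs ξ]; ring
    linarith [hm, hsq]
  by_cases hEp : 0 < ξ ^ 2 * Ip0 + Ip1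
  · -- nondegenerate case
    have hmain : lam ^ 2 * ρp * (ξ ^ 2 * Ip0 + Ip1)
        ≤ (g * (ρp - ρm) * |ξ|) * (ξ ^ 2 * Ip0 + Ip1) := by
      have hgr : 0 ≤ g * (ρp - ρm) := mul_nonneg hg.le (sub_pos.2 hρ).le
      have hm2 := mul_le_mul_of_nonneg_left h2 hgr
      linarith [key, hm2]
    have := le_of_mul_le_mul_right (by linarith : lam ^ 2 * ρp * (ξ ^ 2 * Ip0 + Ip1)
        ≤ g * (ρp - ρm) * |ξ| * (ξ ^ 2 * Ip0 + Ip1)) hEp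
    rw [le_div_iff₀ hρp]
    linarith
  · -- degenerate case: solution vanishes, contradiction
    exfalso
    push_neg at hEp
    have hEp0 : ξ ^ 2 * Ip0 + Ip1 = 0 :=
      le_antisymm hEp (add_nonneg (mul_nonneg hξ2.le hIp0nn) hIp1nn)
    have hIp0 : Ip0 = 0 := by
      refine le_antisymm ?_ hIp0nn
      have h3 : ξ ^ 2 * Ip0 ≤ ξ ^ 2 * 0 := by linarith [hEp0, hIp1nn]
      exact (mul_le_mul_iff_right₀ hξ2).1 h3
    have hψpz : ∀ y ∈ Icc (0:ℝ) 1, ψp y = 0 :=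
      zero_of_integral_sq hcp.continuous (by norm_num) (by rw [← hIp0def]; exact hIp0)
    have ha0 : ψp 0 = 0 := hψpz 0 (by norm_num)
    have hEm0 : ξ ^ 2 * Im0 + Im1 = 0 := by
      rw [ha0] at energy'
      have hub : lam ^ 2 * (ρm * (ξ ^ 2 * Im0 + Im1)) ≤ 0 := by
        linarith [energy', t0, t2, t3, t4]
      have hlb : 0 ≤ ξ ^ 2 * Im0 + Im1 := add_nonneg (mul_nonneg hξ2.le hIm0nn) hIm1nn
      have hl2 : (0:ℝ) < lam ^ 2 := by positivity
      refine le_antisymm ?_ hlb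
      have h1 : lam ^ 2 * (ρm * (ξ ^ 2 * Im0 + Im1)) ≤ lam ^ 2 * (ρm * 0) := by
        linarith [hub]
      have h2' : ρm * (ξ ^ 2 * Im0 + Im1) ≤ ρm * 0 := (mul_le_mul_iff_right₀ hl2).1 h1
      exact (mul_le_mul_iff_right₀ hρm).1 h2'
    have hIm0 : Im0 = 0 := by
      refine le_antisymm ?_ hIm0nn
      have h3 : ξ ^ 2 * Im0 ≤ ξ ^ 2 * 0 := by linarith [hEm0, hIm1nn]
      exact (mul_le_mul_iff_right₀ hξ2).1 h3
    have hψmz : ∀ y ∈ Icc (-1:ℝ) 0, ψm y = 0 :=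
      zero_of_integral_sq hcm.continuous (by norm_num) (by rw [← hIm0def]; exact hIm0)
    apply hnontriv
    intro y hy
    rcases le_total y 0 with hle | hle
    · rw [hm y ⟨hy.1, hle⟩]; exact hψmz y ⟨hy.1, hle⟩
    · rw [hp y ⟨hle, hy.2⟩]; exact hψpz y ⟨hle, hy.2⟩


end
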